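/- Let G be a finite graph (a finite vertex set V with a symmetric edge relation E, loops allowed), and let S, S' ⊆ V be such that G reduces both to the induced subgraph G[S] and to the induced subgraph G[S'], and both G[S] and G[S'] are irreducible. Then G[S] and G[S'] are isomorphic as graphs, i.e., there is a bijection g : S → S' with E(x,y) ⟺ E(g(x),g(y)) for all x, y ∈ S. -/

import Mathlib

/-- `u` dominates `v` in the subgraph of the relation `E` induced on the set `A`:
both lie in `A`, they are distinct, and every neighbor of `v` inside `A` is also
a neighbor of `u`. -/
def DomIn {V : Type} (E : V → V → Prop) (A : Set V) (u v : V) : Prop :=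
  u ∈ A ∧ v ∈ A ∧ u ≠ v ∧ ∀ x ∈ A, E v x → E u x

/-- The graph `(V, E)` reduces to the induced subgraph on `S`: the vertices outside `S`
can be ordered `w₁, …, w_k` so that each `wᵢ` is dominated by some other vertex in the
induced subgraph on `V ∖ {w₁, …, w_{i-1}}`. -/
def ReducesTo {V : Type} (E : V → V → Prop) (S : Set V) : Prop :=
  ∃ w : List V, w.Nodup ∧ (∀ x : V, x ∈ w ↔ x ∉ S) ∧
    ∀ i : Fin w.length, ∃ u : V,
      DomIn E {x : V | x ∉ w.take i.val} u (w.get i)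

/-- The induced subgraph on `S` is irreducible: no vertex of it is dominated by
another one of its vertices. -/
def IrreducibleOn {V : Type} (E : V → V → Prop) (S : Set V) : Prop :=
  ∀ u ∈ S, ∀ v ∈ S, u ≠ v → ¬ (∀ x ∈ S, E v x → E u x)

section Aux

variable {V : Type} (E : V → V → Prop)

/-- Inductive form of reduction relative to an ambient set. -/
inductive Red : Set V → Set V → Prop
  | refl (A : Set V) : Red A A
  | step {A S : Set V} {a u : V} (h : DomIn E A u a) (hr : Red (A \ {a}) S) : Red A S

variable {E}

lemma red_subset {A S : Set V} (h : Red E A S) : S ⊆ A := by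
  induction h with
  | refl A => exact le_refl A
  | step h hr ih => exact ih.trans (Set.diff_subset)

lemma red_of_irr {A S : Set V} (h : Red E A S) (hirr : IrreducibleOn E A) : S = A := by
  cases h with
  | refl => rfl
  | @step _ _ a u hd hr => exact absurd hd.2.2.2 (hirr u hd.1 a hd.2.1 hd.2.2.1)

lemma domIn_mono {A B : Set V} {u a : V} (h : DomIn E A u a) (hu : u ∈ B) (ha : a ∈ B)
    (hBA : B ⊆ A) : DomIn E B u a :=
  ⟨hu, ha, h.2.2.1, fun x hx => h.2.2.2 x (hBA hx)⟩

lemma listToRed : ∀ (w : List V) (A S : Set V), w.Nodup →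
    (∀ x : V, x ∈ w ↔ (x ∈ A ∧ x ∉ S)) → S ⊆ A →
    (∀ i : Fin w.length, ∃ u : V,
      DomIn E {x : V | x ∈ A ∧ x ∉ w.take i.val} u (w.get i)) → Red E A S := by
  intro w
  induction w with
  | nil =>
      intro A S _ hmem hsub _
      have : S = A := by
        ext x
        refine ⟨fun hx => hsub hx, fun hx => ?_⟩
        by_contra hxS
        exact (List.not_mem_nil) ((hmem x).2 ⟨hx, hxS⟩)
      subst this
      exact Red.refl _
  | cons a rest ih =>
      intro A S hnd hmem hsub hdom
      have hane : a ∉ rest := (List.nodup_cons.mp hnd).1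
      obtain ⟨u, hu⟩ := hdom ⟨0, by simp⟩
      have hset0 : {x : V | x ∈ A ∧ x ∉ (a :: rest).take 0} = A := by
        ext x; simp
      rw [hset0] at hu
      have hu' : DomIn E A u a := hu
      refine Red.step hu' ?_
      have haA : a ∈ A ∧ a ∉ S := (hmem a).1 (List.mem_cons_self (a := a) (l := rest))
      apply ih (A \ {a}) S (List.nodup_cons.mp hnd).2
      · intro x
        constructor
        · intro hx
          have hx' := (hmem x).1 (List.mem_cons_of_mem a hx)
          exact ⟨⟨hx'.1, fun h => hane (h ▸ hx)⟩, hx'.2⟩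
        · intro ⟨⟨hxA, hxa⟩, hxS⟩
          rcases List.mem_cons.mp ((hmem x).2 ⟨hxA, hxS⟩) with h | h
          · exact absurd h hxa
          · exact h
      · intro x hx
        exact ⟨hsub hx, fun h => haA.2 (h ▸ hx)⟩
      · intro j
        obtain ⟨u', hu'⟩ := hdom ⟨j.val + 1, by simpa using j.isLt⟩
        refine ⟨u', ?_⟩
        have hget : (a :: rest).get ⟨j.val + 1, by simpa using j.isLt⟩ = rest.get j := rfl
        have hsets : {x : V | x ∈ A ∧ x ∉ (a :: rest).take (j.val + 1)}
            = {x : V | x ∈ A \ {a} ∧ x ∉ rest.take j.val} := by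
          ext x
          simp only [List.take_succ_cons, List.mem_cons, Set.mem_setOf_eq, Set.mem_diff,
            Set.mem_singleton_iff]
          tauto
        rw [hget, hsets] at hu'
        exact hu'

/-- Isomorphism of induced subgraphs. -/
def EIso (E : V → V → Prop) (S T : Set V) : Prop :=
  ∃ g : S ≃ T, ∀ x y : S, E x.1 y.1 ↔ E (g x).1 (g y).1

lemma EIso.refl (S : Set V) : EIso E S S := ⟨Equiv.refl _, fun _ _ => Iff.rfl⟩

lemma EIso.symm {S T : Set V} (h : EIso E S T) : EIso E T S := by
  obtain ⟨g, hg⟩ := h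
  refine ⟨g.symm, fun x y => ?_⟩
  have := (hg (g.symm x) (g.symm y)).symm
  simpa using this

lemma EIso.trans {S T U : Set V} (h : EIso E S T) (h' : EIso E T U) : EIso E S U := by
  obtain ⟨g, hg⟩ := h
  obtain ⟨g', hg'⟩ := h'
  exact ⟨g.trans g', fun x y => (hg x y).trans (hg' (g x) (g y))⟩

section Transport

variable {A : Set V} {σ : V ≃ V}
variable (hE : ∀ x ∈ A, ∀ y ∈ A, E x y ↔ E (σ x) (σ y))

include hE

lemma red_map : ∀ {B S : Set V}, B ⊆ A → Red E B S → Red E (σ '' B) (σ '' S) := by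
  intro B S hBA h
  induction h with
  | refl B => exact Red.refl _
  | @step B S b v hd hr ih =>
      have hvA : v ∈ A := hBA hd.1
      have hbA : b ∈ A := hBA hd.2.1
      refine Red.step (a := σ b) (u := σ v) ⟨⟨v, hd.1, rfl⟩, ⟨b, hd.2.1, rfl⟩,
        fun h => hd.2.2.1 (σ.injective h), ?_⟩ ?_
      · rintro x ⟨y, hy, rfl⟩ hxy
        have hyA : y ∈ A := hBA hy
        exact (hE v hvA y hyA).mp (hd.2.2.2 y hy ((hE b hbA y hyA).mpr hxy))
      · have : σ '' (B \ {b}) = σ '' B \ {σ b} := by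
          rw [Set.image_diff σ.injective, Set.image_singleton]
        rw [← this]
        exact ih (fun x hx => hBA hx.1)

lemma irr_map {S : Set V} (hSA : S ⊆ A) (hirr : IrreducibleOn E S) :
    IrreducibleOn E (σ '' S) := by
  rintro _ ⟨p, hp, rfl⟩ _ ⟨q, hq, rfl⟩ hne hdom
  refine hirr p hp q hq (fun h => hne (h ▸ rfl)) (fun x hx hqx => ?_)
  have h1 : E (σ q) (σ x) := (hE q (hSA hq) x (hSA hx)).mp hqx
  have h2 : E (σ p) (σ x) := hdom (σ x) ⟨x, hx, rfl⟩ h1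
  exact (hE p (hSA hp) x (hSA hx)).mpr h2

lemma eiso_map {S : Set V} (hSA : S ⊆ A) : EIso E S (σ '' S) := by
  refine ⟨Equiv.image σ S, fun x y => ?_⟩
  have hx := hE x.1 (hSA x.2) y.1 (hSA y.2)
  simpa [Equiv.image] using hx

end Transport

lemma key (hsymm : Symmetric E) : ∀ {A S' : Set V}, Red E A S' → ∀ a u : V,
    DomIn E A u a → IrreducibleOn E S' →
    ∃ T : Set V, Red E (A \ {a}) T ∧ IrreducibleOn E T ∧ EIso E S' T := by
  intro A S' h
  classical
  induction h with
  | refl A =>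
      intro a u hd hirr
      exact absurd hd.2.2.2 (hirr u hd.1 a hd.2.1 hd.2.2.1)
  | @step A S' b v hb hr ih =>
      intro a u hu hirr
      by_cases hba : b = a
      · subst hba
        exact ⟨S', hr, hirr, EIso.refl S'⟩
      -- b ≠ a
      by_cases htwin : u = b ∧ v = a
      · -- twin case: N_A(a) = N_A(b); use the swap automorphism
        obtain ⟨hub, hva⟩ := htwin
        have haA : a ∈ A := hu.2.1
        have hbA : b ∈ A := hb.2.1
        have hN : ∀ x ∈ A, E a x ↔ E b x := fun x hx =>
          ⟨fun h => hub ▸ hu.2.2.2 x hx h, fun h => hva ▸ hb.2.2.2 x hx h⟩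
        set σ := Equiv.swap a b with hσ
        have hσa : σ a = b := Equiv.swap_apply_left a b
        have hσb : σ b = a := Equiv.swap_apply_right a b
        have hσA : ∀ x ∈ A, σ x ∈ A := by
          intro x hx
          rcases eq_or_ne x a with rfl | hxa
          · rwa [hσa]
          rcases eq_or_ne x b with rfl | hxb
          · rwa [hσb]
          · rwa [Equiv.swap_apply_of_ne_of_ne hxa hxb]
        have hstep1 : ∀ x ∈ A, ∀ y ∈ A, E x y → E (σ x) y := by
          intro x hx y hy hxy
          rcases eq_or_ne x a with rfl | hxa
          · rw [hσa]; exact (hN y hy).mp hxy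
          rcases eq_or_ne x b with rfl | hxb
          · rw [hσb]; exact (hN y hy).mpr hxy
          · rwa [Equiv.swap_apply_of_ne_of_ne hxa hxb]
        have hstep2 : ∀ x ∈ A, ∀ y ∈ A, E x y → E (σ x) (σ y) := by
          intro x hx y hy hxy
          have h1 : E (σ x) y := hstep1 x hx y hy hxy
          have h2 : E (σ y) (σ x) := hstep1 y hy (σ x) (hσA x hx) (hsymm h1)
          exact hsymm h2
        have hE : ∀ x ∈ A, ∀ y ∈ A, (E x y ↔ E (σ x) (σ y)) := by
          intro x hx y hy
          refine ⟨hstep2 x hx y hy, fun h => ?_⟩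
          have := hstep2 (σ x) (hσA x hx) (σ y) (hσA y hy) h
          simpa only [hσ, Equiv.swap_apply_self] using this
        have hS'A : S' ⊆ A := (red_subset hr).trans Set.diff_subset
        have hredT : Red E (σ '' (A \ {b})) (σ '' S') :=
          red_map hE Set.diff_subset hr
        have himg : σ '' (A \ {b}) = A \ {a} := by
          rw [Set.image_diff σ.injective, Set.image_singleton, hσb]
          congr 1
          ext x
          constructor
          · rintro ⟨y, hy, rfl⟩; exact hσA y hy
          · intro hx
            exact ⟨σ x, hσA x hx, by simp only [hσ, Equiv.swap_apply_self]⟩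
        rw [himg] at hredT
        exact ⟨σ '' S', hredT, irr_map hE hS'A hirr, eiso_map hE hS'A⟩
      -- non-twin case
      · have hnontwin : u ≠ b ∨ v ≠ a := by
          by_contra h
          push_neg at h
          exact htwin ⟨h.1, h.2⟩
        -- find a dominator u' of a in A with u' ≠ b
        obtain ⟨u', hu'A, hu'a, hu'b, hu'dom⟩ :
            ∃ u' : V, u' ∈ A ∧ u' ≠ a ∧ u' ≠ b ∧ ∀ x ∈ A, E a x → E u' x := by
          rcases eq_or_ne u b with rfl | hub
          · -- u = b, so v ≠ a; N a ⊆ N u = N b ⊆ N v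
            have hva : v ≠ a := by
              rcases hnontwin with h | h
              · exact absurd rfl h
              · exact h
            exact ⟨v, hb.1, hva, hb.2.2.1, fun x hx h =>
              hb.2.2.2 x hx (hu.2.2.2 x hx h)⟩
          · exact ⟨u, hu.1, hu.2.2.1, hub, hu.2.2.2⟩
        -- find a dominator v' of b in A with v' ≠ a
        obtain ⟨v', hv'A, hv'b, hv'a, hv'dom⟩ :
            ∃ v' : V, v' ∈ A ∧ v' ≠ b ∧ v' ≠ a ∧ ∀ x ∈ A, E b x → E v' x := by
          rcases eq_or_ne v a with rfl | hva
          · -- v = a, so u ≠ b; N b ⊆ N a ⊆ N u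
            have hub : u ≠ b := by
              rcases hnontwin with h | h
              · exact h
              · exact absurd rfl h
            exact ⟨u, hu.1, hub, hu.2.2.1, fun x hx h =>
              hu.2.2.2 x hx (hb.2.2.2 x hx h)⟩
          · exact ⟨v, hb.1, hb.2.2.1, hva, hb.2.2.2⟩
        have haA : a ∈ A := hu.2.1
        have hbA' : b ∈ A := hb.2.1
        -- a is dominated by u' in A \ {b}
        have hdA : DomIn E (A \ {b}) u' a :=
          domIn_mono ⟨hu'A, haA, hu'a, hu'dom⟩ ⟨hu'A, hu'b⟩ ⟨haA, fun h => hba (h.symm)⟩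
            Set.diff_subset
        obtain ⟨T, hT, hirrT, hisoT⟩ := ih a u' hdA hirr
        -- b is dominated by v' in A \ {a}
        have hdB : DomIn E (A \ {a}) v' b :=
          domIn_mono ⟨hv'A, hbA', hv'b, hv'dom⟩ ⟨hv'A, hv'a⟩ ⟨hbA', hba⟩ Set.diff_subset
        refine ⟨T, Red.step hdB ?_, hirrT, hisoT⟩
        rw [Set.diff_diff_comm]
        exact hT

lemma main_red (hsymm : Symmetric E) : ∀ {A S : Set V}, Red E A S → ∀ S' : Set V,
    Red E A S' → IrreducibleOn E S → IrreducibleOn E S' → EIso E S S' := by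
  intro A S h
  induction h with
  | refl A =>
      intro S' h' hirr hirr'
      rw [red_of_irr h' hirr]
      exact EIso.refl A
  | @step A S a u hd hr ih =>
      intro S' h' hirr hirr'
      obtain ⟨T, hT, hirrT, hisoT⟩ := key hsymm h' a u hd hirr'
      exact (ih T hT hirr hirrT).trans hisoT.symm

end Aux

/-- if a finite graph (loops allowed) reduces to two irreducible induced
subgraphs `G[S]` and `G[S']`, then these are isomorphic. -/
theorem irreducible_reductions_isomorphic {V : Type} [Fintype V]
    (E : V → V → Prop) (hsymm : Symmetric E) (S S' : Set V)
    (hS : ReducesTo E S) (hS' : ReducesTo E S')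
    (hirr : IrreducibleOn E S) (hirr' : IrreducibleOn E S') :
    ∃ g : S ≃ S', ∀ x y : S, E x.1 y.1 ↔ E (g x).1 (g y).1 := by
  have toRed : ∀ T : Set V, ReducesTo E T → Red E Set.univ T := by
    rintro T ⟨w, hnd, hmem, hdom⟩
    apply listToRed w Set.univ T hnd
    · intro x; simp only [Set.mem_univ, true_and]; exact hmem x
    · exact fun x _ => Set.mem_univ x
    · intro i
      obtain ⟨u, hu⟩ := hdom i
      refine ⟨u, ?_⟩
      have : {x : V | x ∈ Set.univ ∧ x ∉ w.take i.val} = {x : V | x ∉ w.take i.val} := by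
        ext x; simp
      rw [this]
      exact hu
  exact main_red hsymm (toRed S hS) S' (toRed S' hS') hirr hirr'
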